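/- Assume char F = 2 and let f be a derivation of N. (i) If block t contains at least two indices (#{s : b s = t} ≥ 2), then for every A ∈ N^{t−1,t}, f(A) r s = 0 whenever (b r, b s) = (1, t−2), and for every A ∈ N^{t−2,t}, f(A) r s = 0 whenever (b r, b s) = (1, t−1). (ii) If block t consists of a single index s₁, then, writing F_u ∈ N^{t−1,t} for the matrix with entry 1 in position (u, s₁) and 0 elsewhere (for b u = t−1), and F'_v ∈ N^{t−2,t} for the matrix with entry 1 in position (v, s₁) and 0 elsewhere (for b v = t−2), one has f(F'_v) r u = f(F_u) r v for all indices u with b u = t−1, v with b v = t−2, and r with b r = 1. -/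

import Mathlib

/-- `A` is a strictly block upper triangular matrix relative to the block function `b`
(index `r` lies in block `b r`): `A r s = 0` whenever `b r ≥ b s`. -/
def InN {F : Type*} [Field F] {n : ℕ} (b : Fin n → ℕ)
    (A : Matrix (Fin n) (Fin n) F) : Prop :=
  ∀ r s, b s ≤ b r → A r s = 0

/-- `A` lies in the `(i,j)` block `N^{ij}`: `A r s = 0` unless `b r = i` and `b s = j`. -/
def InBlk {F : Type*} [Field F] {n : ℕ} (b : Fin n → ℕ) (i j : ℕ)
    (A : Matrix (Fin n) (Fin n) F) : Prop :=
  ∀ r s, ¬(b r = i ∧ b s = j) → A r s = 0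

/-- `f` is a derivation of the Lie algebra `N` of strictly block upper triangular matrices:
it maps `N` into `N` and satisfies `f [X,Y] = [f X, Y] + [X, f Y]` on `N`,
where `[X,Y] = XY - YX`. -/
def IsDerN {F : Type*} [Field F] {n : ℕ} (b : Fin n → ℕ)
    (f : Matrix (Fin n) (Fin n) F →ₗ[F] Matrix (Fin n) (Fin n) F) : Prop :=
  (∀ A, InN b A → InN b (f A)) ∧
  ∀ X Y, InN b X → InN b Y →
    f (X * Y - Y * X) = (f X * Y - Y * f X) + (X * f Y - f Y * X)

open Matrix in
lemma stdInN {F : Type*} [Field F] {n : ℕ} (b : Fin n → ℕ) {a c : Fin n}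
    (hac : b a < b c) : InN b (single a c (1 : F)) := by
  intro r s hrs
  simp only [single, of_apply, ite_eq_right_iff]
  rintro ⟨rfl, rfl⟩
  omega

open Matrix in
lemma key {F : Type*} [Field F] {n t : ℕ} (b : Fin n → ℕ)
    (f : Matrix (Fin n) (Fin n) F →ₗ[F] Matrix (Fin n) (Fin n) F)
    (hf : IsDerN b f) {x q₀ s q : Fin n} (r : Fin n)
    (hx : b x < t) (hq₀ : b q₀ = t) (hs : b s < t) (hq : b q = t) (hqq : q ≠ q₀) :
    f (single x q₀ (1 : F)) r s = 0 := by
  set A := single x q₀ (1 : F) with hAdef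
  set Y := single s q (1 : F) with hYdef
  have hA : InN b A := stdInN b (by omega)
  have hY : InN b Y := stdInN b (by omega)
  have h := hf.2 A Y hA hY
  rw [hAdef, hYdef, single_mul_single_of_ne (1 : F) x q₀ s (show q₀ ≠ s by intro h; rw [h] at hq₀; omega) (1 : F),
    single_mul_single_of_ne (1 : F) s q x (show q ≠ x by intro h; rw [h] at hq; omega) (1 : F), sub_zero,
    map_zero] at h
  have h2 := congrFun (congrFun h.symm r) q
  simp only [Matrix.sub_apply, Matrix.add_apply, Matrix.zero_apply] at h2
  rw [show (f A * Y) r q = f A r s * 1 from mul_single_apply_same 1 s q r (f A),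
    show (f Y * A) r q = 0 from mul_single_apply_of_ne 1 x q₀ r q hqq (f Y)] at h2
  have e1 : (Y * f A) r q = 0 := by
    rcases eq_or_ne r s with rfl | hne
    · rw [hYdef, single_mul_apply_same, hf.1 A hA q q le_rfl, mul_zero]
    · exact single_mul_apply_of_ne 1 s q r q hne (f A)
  have e2 : (A * f Y) r q = 0 := by
    rcases eq_or_ne r x with rfl | hne
    · rw [hAdef, single_mul_apply_same, hf.1 Y hY q₀ q (by omega), mul_zero]
    · exact single_mul_apply_of_ne 1 x q₀ r q hne (f Y)
  rw [e1, e2] at h2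
  simpa using h2

open Matrix

/-- for `char F = 2` and a derivation `f` of `N`: (i) if block `t` has at
least two indices then the `(1,t-2)` block of `f(N^{t-1,t})` and the `(1,t-1)` block of
`f(N^{t-2,t})` vanish; (ii) if block `t` is a single index `s₁` then
`f(F'_v) r u = f(F_u) r v` for `b u = t-1`, `b v = t-2`, `b r = 1`, where
`F_u = E^{t-1,t}_{u s₁}` and `F'_v = E^{t-2,t}_{v s₁}`. -/
theorem stmt17 {F : Type*} [Field F] {n t : ℕ} (b : Fin n → ℕ)
    (hn : 1 ≤ n) (ht : 3 ≤ t) (hmono : Monotone b)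
    (hlb : ∀ r, 1 ≤ b r) (hub : ∀ r, b r ≤ t)
    (hsurj : ∀ k, 1 ≤ k → k ≤ t → ∃ r, b r = k)
    (hchar : ringChar F = 2)
    (f : Matrix (Fin n) (Fin n) F →ₗ[F] Matrix (Fin n) (Fin n) F)
    (hf : IsDerN b f) :
    (2 ≤ (Finset.univ.filter fun s => b s = t).card →
      (∀ A, InBlk b (t - 1) t A → ∀ r s, b r = 1 → b s = t - 2 → f A r s = 0) ∧
      (∀ A, InBlk b (t - 2) t A → ∀ r s, b r = 1 → b s = t - 1 → f A r s = 0)) ∧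
    (∀ s₁ : Fin n, b s₁ = t → (Finset.univ.filter fun s => b s = t).card = 1 →
      ∀ u v r, b u = t - 1 → b v = t - 2 → b r = 1 →
        f (Matrix.single v s₁ (1 : F)) r u
          = f (Matrix.single u s₁ (1 : F)) r v) := by
  constructor
  · intro hcard
    obtain ⟨q₁, hq₁, q₂, hq₂, hq₁₂⟩ :=
      Finset.one_lt_card.mp (lt_of_lt_of_le one_lt_two hcard)
    rw [Finset.mem_filter] at hq₁ hq₂
    have main : ∀ (i : ℕ), i < t → ∀ A, InBlk b i t A → ∀ r s, b s < t → f A r s = 0 := by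
      intro i hi A hA r s hs
      have hdec : f A r s = ∑ p : Fin n, ∑ j : Fin n,
          f (single p j (A p j)) r s := by
        conv_lhs => rw [matrix_eq_sum_single A]
        rw [map_sum]
        simp only [map_sum, Matrix.sum_apply]
      rw [hdec]
      apply Finset.sum_eq_zero; intro p _
      apply Finset.sum_eq_zero; intro j _
      by_cases hbj : b p = i ∧ b j = t
      · have hsm : single p j (A p j) = A p j • single p j (1 : F) := by
          rw [smul_single, smul_eq_mul, mul_one]
        rw [hsm, f.map_smul, Matrix.smul_apply]
        obtain ⟨q, hqt, hqj⟩ : ∃ q : Fin n, b q = t ∧ q ≠ j := by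
          rcases eq_or_ne j q₁ with rfl | hne
          · exact ⟨q₂, hq₂.2, hq₁₂.symm⟩
          · exact ⟨q₁, hq₁.2, hne.symm⟩
        rw [key b f hf r (by omega) hbj.2 hs hqt hqj, smul_zero]
      · rw [hA p j hbj, single_zero, map_zero]
        rfl
    refine ⟨fun A hA r s hr hs => main (t - 1) (by omega) A hA r s (by omega),
      fun A hA r s hr hs => main (t - 2) (by omega) A hA r s (by omega)⟩
  · intro s₁ hs₁ _ u v r hu hv hr
    haveI : CharP F 2 := hchar ▸ ringChar.charP F
    set Fu := single u s₁ (1 : F) with hFudef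
    set Z := single v u (1 : F) with hZdef
    have hFu : InN b Fu := stdInN b (by omega)
    have hZ : InN b Z := stdInN b (by omega)
    have h := hf.2 Z Fu hZ hFu
    rw [hZdef, hFudef, single_mul_single_same, one_mul,
      single_mul_single_of_ne (1 : F) u s₁ v (show s₁ ≠ v by intro h; rw [h] at hs₁; omega) (1 : F),
      sub_zero] at h
    have h2 := congrFun (congrFun h r) u
    simp only [Matrix.sub_apply, Matrix.add_apply] at h2
    rw [show (f Z * Fu) r u = 0 from
        mul_single_apply_of_ne 1 u s₁ r u (show u ≠ s₁ by intro h; rw [h] at hu; omega) (f Z),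
      show (f Fu * Z) r u = f Fu r v * 1 from mul_single_apply_same 1 v u r (f Fu)] at h2
    have e1 : (Fu * f Z) r u = 0 := by
      rcases eq_or_ne r u with rfl | hne
      · rw [hFudef, single_mul_apply_same, hf.1 Z hZ s₁ _ (by omega), mul_zero]
      · exact single_mul_apply_of_ne 1 u s₁ r u hne (f Z)
    have e2 : (Z * f Fu) r u = 0 := by
      rcases eq_or_ne r v with rfl | hne
      · rw [hZdef, single_mul_apply_same, hf.1 Fu hFu _ _ le_rfl, mul_zero]
      · exact single_mul_apply_of_ne 1 v u r u hne (f Fu)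
    rw [e1, e2, mul_one] at h2
    rw [h2, sub_self, zero_add, zero_sub]
    exact CharTwo.neg_eq _
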